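/- Let V be a finite-dimensional real inner product space with basis e₁,…,eₙ such that ⟨eᵢ, eⱼ⟩ ≤ 0 for all i ≠ j, and let e₁*,…,eₙ* be the dual basis with respect to the inner product (i.e., ⟨eᵢ*, eⱼ⟩ = δᵢⱼ). Then ⟨eᵢ*, eⱼ*⟩ ≥ 0 for all i and j. -/

import Mathlib

open scoped RealInnerProductSpace
open Finset

theorem aux_nonneg {V : Type*} [NormedAddCommGroup V] [InnerProductSpace ℝ V]
    [FiniteDimensional ℝ V] {n : ℕ} (e : Module.Basis (Fin n) ℝ V) (estar : Fin n → V)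
    (hdual : ∀ i j : Fin n, ⟪estar i, e j⟫ = if i = j then (1 : ℝ) else 0)
    (hneg : ∀ i j : Fin n, i ≠ j → ⟪e i, e j⟫ ≤ 0) (j k : Fin n) :
    0 ≤ e.repr (estar j) k := by
  set c : Fin n → ℝ := fun k => e.repr (estar j) k with hc
  set d : Fin n → ℝ := fun k => max (-(c k)) 0 with hd
  have hdnn : ∀ k, 0 ≤ d k := fun k => le_max_right _ _
  have hcd : ∀ k, c k + d k = max (c k) 0 := by
    intro k
    rcases le_or_gt 0 (c k) with h | h
    · simp [hd, max_eq_left, h, neg_nonpos.mpr h]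
    · simp [hd, max_eq_right h.le, max_eq_right (neg_nonneg.mpr h.le), h.le]
  have hcdnn : ∀ k, 0 ≤ c k + d k := fun k => (hcd k) ▸ le_max_right _ _
  have hzero : ∀ k, (c k + d k) * d k = 0 := by
    intro k
    rcases le_or_gt 0 (c k) with h | h
    · have : d k = 0 := by simp [hd, neg_nonpos.mpr h]
      simp [this]
    · have : c k + d k = 0 := by rw [hcd k]; exact max_eq_right h.le
      simp [this]
  set xm : V := ∑ k, d k • e k with hxm
  set xp : V := ∑ k, (c k + d k) • e k with hxp
  have hx : estar j = ∑ k, c k • e k := (e.sum_repr (estar j)).symm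
  have hsub : xp - estar j = xm := by
    rw [hx, hxm, hxp, ← Finset.sum_sub_distrib]
    congr 1; ext k; rw [← sub_smul]; ring_nf
  have h1 : ⟪xm, estar j⟫ = d j := by
    rw [hxm, sum_inner]
    have : ∀ k ∈ univ, ⟪d k • e k, estar j⟫ = if j = k then d k else 0 := by
      intro k _
      rw [real_inner_smul_left, real_inner_comm, hdual]
      split <;> simp
    rw [Finset.sum_congr rfl this, Finset.sum_ite_eq]
    simp
  have h2 : ⟪xm, xp⟫ ≤ 0 := by
    rw [hxm, hxp, sum_inner]
    apply Finset.sum_nonpos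
    intro k _
    rw [inner_sum]
    apply Finset.sum_nonpos
    intro l _
    rw [real_inner_smul_left, real_inner_smul_right]
    rcases eq_or_ne k l with rfl | hkl
    · have := hzero k; nlinarith [real_inner_self_nonneg (x := e k)]
    · exact mul_nonpos_of_nonneg_of_nonpos (hdnn k)
        (mul_nonpos_of_nonneg_of_nonpos (hcdnn l) (hneg k l hkl))
  have h3 : ⟪xm, xm⟫ ≤ 0 := by
    have : ⟪xm, xm⟫ = ⟪xm, xp⟫ - ⟪xm, estar j⟫ := by
      rw [← inner_sub_right, hsub]
    rw [this, h1]
    linarith [hdnn j]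
  have hxm0 : xm = 0 := by
    have := real_inner_self_nonneg (x := xm)
    exact inner_self_eq_zero.mp (le_antisymm h3 this)
  have hd0 : ∀ k, d k = 0 := by
    have := Fintype.linearIndependent_iff.mp e.linearIndependent d (by
      rw [← hxm0, hxm])
    exact this
  have := hd0 k
  simp only [hd] at this
  have : -(c k) ≤ 0 := by
    by_contra h
    push_neg at h
    rw [max_eq_left h.le] at this
    linarith
  linarith

theorem stmt0 {V : Type*} [NormedAddCommGroup V] [InnerProductSpace ℝ V]
    [FiniteDimensional ℝ V] {n : ℕ} (e : Module.Basis (Fin n) ℝ V) (estar : Fin n → V)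
    (hdual : ∀ i j : Fin n, ⟪estar i, e j⟫ = if i = j then (1 : ℝ) else 0)
    (hneg : ∀ i j : Fin n, i ≠ j → ⟪e i, e j⟫ ≤ 0) :
    ∀ i j : Fin n, 0 ≤ ⟪estar i, estar j⟫ := by
  intro i j
  have hx : estar j = ∑ k, e.repr (estar j) k • e k := (e.sum_repr (estar j)).symm
  rw [hx, inner_sum]
  have : ∀ k ∈ Finset.univ, ⟪estar i, e.repr (estar j) k • e k⟫
      = if i = k then e.repr (estar j) k else 0 := by
    intro k _
    rw [real_inner_smul_right, hdual]
    split <;> simp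
  rw [Finset.sum_congr rfl this, Finset.sum_ite_eq]
  simp only [Finset.mem_univ, if_true]
  exact aux_nonneg e estar hdual hneg j i
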